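/- Let r_1, …, r_m be strictly upper triangular matrix units in UJ_n (i.e. each r_k = e_{i_k j_k} with i_k < j_k) such that the associative matrix product r_1 r_2 ⋯ r_m ≠ 0, and let σ be a permutation of {1,…,m}. Then the left-normed Jordan product r_{σ⁻¹(1)} ∘ r_{σ⁻¹(2)} ∘ ⋯ ∘ r_{σ⁻¹(m)} is nonzero if and only if σ ∈ 𝒯_m. -/

import Mathlib

open Matrix

/-- The submodule of upper triangular `n × n` matrices over `K`. -/
def UTs (K : Type*) [Field K] (n : ℕ) : Submodule K (Matrix (Fin n) (Fin n) K) where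
  carrier := {M | ∀ i j : Fin n, (j : ℕ) < (i : ℕ) → M i j = 0}
  add_mem' := by
    intro a b ha hb i j h
    simp [ha i j h, hb i j h]
  zero_mem' := by
    intro i j h
    simp
  smul_mem' := by
    intro c a ha i j h
    simp [ha i j h]

/-- `UJ K n` : the underlying space of the Jordan algebra of upper triangular matrices. -/
abbrev UJ (K : Type*) [Field K] (n : ℕ) : Type _ := ↥(UTs K n)

theorem mem_UTs {K : Type*} [Field K] {n : ℕ} {a : Matrix (Fin n) (Fin n) K} :
    a ∈ UTs K n ↔ ∀ i j : Fin n, (j : ℕ) < (i : ℕ) → a i j = 0 := Iff.rfl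

theorem UTs_mul_mem {K : Type*} [Field K] {n : ℕ} {a b : Matrix (Fin n) (Fin n) K}
    (ha : a ∈ UTs K n) (hb : b ∈ UTs K n) : a * b ∈ UTs K n := by
  rw [mem_UTs] at ha hb ⊢
  intro i j h
  rw [Matrix.mul_apply]
  apply Finset.sum_eq_zero
  intro k _
  rcases lt_or_ge (k : ℕ) (i : ℕ) with hk | hk
  · rw [ha i k hk, zero_mul]
  · rw [hb k j (lt_of_lt_of_le h hk), mul_zero]

/-- The Jordan product `x ∘ y = xy + yx` on upper triangular matrices. -/
def jmul {K : Type*} [Field K] {n : ℕ} (x y : UJ K n) : UJ K n :=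
  ⟨x.1 * y.1 + y.1 * x.1, (UTs K n).add_mem (UTs_mul_mem x.2 y.2) (UTs_mul_mem y.2 x.2)⟩

/-- The matrix unit `e_{ij}` (with `i ≤ j`) as an element of `UJ K n`. -/
def Eu (K : Type*) [Field K] {n : ℕ} (i j : Fin n) (h : i ≤ j) : UJ K n :=
  ⟨Matrix.single i j 1, by
    rw [mem_UTs]
    intro a b hab
    by_cases h1 : i = a ∧ j = b
    · exfalso
      rcases h1 with ⟨rfl, rfl⟩
      exact absurd hab (not_lt.mpr h)
    · simp only [Matrix.single, Matrix.of_apply, if_neg h1]⟩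

/-- `Y⁺_{i:m} = e_{i:m} + e_{−i:m}` (`0`-based index `i`, `i + m < n`). -/
def Yp (K : Type*) [Field K] {n : ℕ} (i m : ℕ) (h : i + m < n) : UJ K n :=
  Eu K ⟨i, by omega⟩ ⟨i + m, h⟩ (Fin.mk_le_mk.mpr (by omega)) +
  Eu K ⟨n - 1 - i - m, by omega⟩ ⟨n - 1 - i, by omega⟩ (Fin.mk_le_mk.mpr (by omega))

/-- `Y⁻_{i:m} = e_{i:m} − e_{−i:m}` (`0`-based index `i`, `i + m < n`). -/
def Ym (K : Type*) [Field K] {n : ℕ} (i m : ℕ) (h : i + m < n) : UJ K n :=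
  Eu K ⟨i, by omega⟩ ⟨i + m, h⟩ (Fin.mk_le_mk.mpr (by omega)) -
  Eu K ⟨n - 1 - i - m, by omega⟩ ⟨n - 1 - i, by omega⟩ (Fin.mk_le_mk.mpr (by omega))

/-- A `G`-grading on the Jordan algebra `UJ K n`: a direct sum decomposition into
`K`-subspaces `comp g` with `comp g ∘ comp h ⊆ comp (g * h)`. -/
structure UJGrading (K : Type*) [Field K] (n : ℕ) (G : Type*) [Group G] where
  comp : G → Submodule K (UJ K n)
  indep : iSupIndep comp
  sup_top : (⨆ g, comp g) = ⊤
  jmul_mem : ∀ (g h : G) (x y : UJ K n), x ∈ comp g → y ∈ comp h → jmul x y ∈ comp (g * h)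

/-- A graded isomorphism between two families of components: a bijective linear map
preserving the Jordan product and mapping each component onto the corresponding one. -/
def GradedIso {K : Type*} [Field K] {n : ℕ} {G : Type*} [Group G]
    (A A' : G → Submodule K (UJ K n)) : Prop :=
  ∃ ψ : UJ K n ≃ₗ[K] UJ K n,
    (∀ x y, ψ (jmul x y) = jmul (ψ x) (ψ y)) ∧
    ∀ g, (A g).map (ψ : UJ K n →ₗ[K] UJ K n) = A' g

/-- A family of components is elementary if every matrix unit is homogeneous. -/
def IsElementaryFam {K : Type*} [Field K] {n : ℕ} {G : Type*} [Group G]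
    (A : G → Submodule K (UJ K n)) : Prop :=
  ∀ (i j : Fin n) (h : i ≤ j), ∃ g, Eu K i j h ∈ A g

/-- A family of components is of mirror type (MT) if every nonzero `Y⁺_{i:m}`, `Y⁻_{i:m}`
is homogeneous, and their degrees differ whenever both are nonzero. -/
def IsMTFam {K : Type*} [Field K] {n : ℕ} {G : Type*} [Group G]
    (A : G → Submodule K (UJ K n)) : Prop :=
  ∀ (i m : ℕ) (h : i + m < n),
    (Yp K i m h ≠ 0 → ∃ g, Yp K i m h ∈ A g) ∧
    (Ym K i m h ≠ 0 → ∃ g, Ym K i m h ∈ A g) ∧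
    (Yp K i m h ≠ 0 → Ym K i m h ≠ 0 →
      ∀ g g' : G, Yp K i m h ∈ A g → Ym K i m h ∈ A g' → g ≠ g')

/-- The degree of the matrix unit `e_{ij}` in the elementary grading defined by `η`:
`g_i g_{i+1} ⋯ g_{j-1}`. -/
def elemDeg {n : ℕ} (G : Type*) [CommGroup G] (η : Fin (n - 1) → G) (i j : Fin n) : G :=
  ∏ k ∈ (Finset.Ico (i : ℕ) (j : ℕ)).attach,
    η ⟨k.1, by have hk := Finset.mem_Ico.mp k.2; have hj := j.isLt; omega⟩

/-- The components of the elementary grading `(UJ_n, η)`. -/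
def elemComp (K : Type*) [Field K] {n : ℕ} {G : Type*} [CommGroup G]
    (η : Fin (n - 1) → G) (g : G) : Submodule K (UJ K n) :=
  Submodule.span K {x : UJ K n | ∃ (i j : Fin n) (h : i ≤ j), elemDeg G η i j = g ∧ x = Eu K i j h}

/-- The degree of `Y⁺_{i:m}` in the MT grading determined by `η ∈ G^{⌈(n-1)/2⌉}`. -/
def mtDeg {n : ℕ} (G : Type*) [CommGroup G] (η : Fin (n / 2) → G)
    (i m : ℕ) (h : i + m < n) : G :=
  ∏ k ∈ (Finset.range m).attach,
    η ⟨min (i + k.1) (n - 2 - (i + k.1)), by have hk := Finset.mem_range.mp k.2; omega⟩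

/-- The components of the MT grading `(UJ_n, t, η)`:
`deg Y⁺_{i:m}` is `mtDeg η i m` and `deg Y⁻_{i:m} = t ⬝ mtDeg η i m`. -/
def mtComp (K : Type*) [Field K] {n : ℕ} {G : Type*} [CommGroup G]
    (t : G) (η : Fin (n / 2) → G) (g : G) : Submodule K (UJ K n) :=
  Submodule.span K {x : UJ K n |
    (∃ (i m : ℕ) (h : i + m < n), mtDeg G η i m h = g ∧ x = Yp K i m h) ∨
    (∃ (i m : ℕ) (h : i + m < n), t * mtDeg G η i m h = g ∧ x = Ym K i m h)}

/-- The set `𝒯_m` of permutations that strictly decrease to the value `0` and then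
strictly increase. -/
def TT (m : ℕ) : Set (Equiv.Perm (Fin m)) :=
  {σ | ∃ t : Fin m, (σ t : ℕ) = 0 ∧
    (∀ a b : Fin m, a < b → b ≤ t → σ b < σ a) ∧
    (∀ a b : Fin m, t ≤ a → a < b → σ a < σ b)}

/-- The left-normed Jordan product of a list of elements (`0` for the empty list). -/
def jprod {K : Type*} [Field K] {n : ℕ} : List (UJ K n) → UJ K n
  | [] => 0
  | x :: xs => xs.foldl jmul x

/-- The `k`-th left-normed Jordan power `x ∘ x ∘ ⋯ ∘ x` (`k` factors, `0` for `k = 0`). -/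
def jpow {K : Type*} [Field K] {n : ℕ} (x : UJ K n) : ℕ → UJ K n
  | 0 => 0
  | 1 => x
  | (k + 2) => jmul (jpow x (k + 1)) x

-- ==================== auxiliary lemmas ====================

lemma jmul_zero_left {K : Type*} [Field K] {n : ℕ} (y : UJ K n) : jmul 0 y = 0 := by
  apply Subtype.ext; simp [jmul]

lemma jmul_val {K : Type*} [Field K] {n : ℕ} (x y : UJ K n) :
    (jmul x y).1 = x.1 * y.1 + y.1 * x.1 := rfl

lemma stdBM_ne_zero {K : Type*} [Field K] {n : ℕ} (i j : Fin n) :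
    Matrix.single i j (1:K) ≠ 0 := by
  intro h
  have := congrFun (congrFun h i) j
  simp [Matrix.single] at this

/-- partial left-normed products of a sequence -/
def pp {K : Type*} [Field K] {n : ℕ} (g : ℕ → UJ K n) : ℕ → UJ K n
  | 0 => g 0
  | (k+1) => jmul (pp g k) (g (k+1))

lemma foldl_eq_pp {K : Type*} [Field K] {n : ℕ} (g : ℕ → UJ K n) (N : ℕ) :
    List.foldl jmul (g 0) (List.ofFn (fun i : Fin N => g ((i:ℕ)+1))) = pp g N := by
  induction N with
  | zero => simp [pp]
  | succ N ih =>
    rw [List.ofFn_succ']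
    simp only [List.concat_eq_append, List.foldl_concat, Fin.coe_castSucc, Fin.val_last]
    rw [ih]
    rfl

lemma prod_chain {K : Type*} [Field K] {n : ℕ} : ∀ (m : ℕ) (f g : Fin (m+1) → Fin n),
    (List.ofFn (fun k => Matrix.single (f k) (g k) (1:K))).prod ≠ 0 →
    (∀ (k : ℕ) (hk : k < m), g ⟨k, by omega⟩ = f ⟨k+1, by omega⟩) ∧
    (List.ofFn (fun k => Matrix.single (f k) (g k) (1:K))).prod =
      Matrix.single (f 0) (g (Fin.last m)) 1 := by
  intro m
  induction m with
  | zero =>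
    intro f g _
    refine ⟨by omega, ?_⟩
    rw [List.ofFn_succ]
    simp
  | succ m ih =>
    intro f g hne
    have hsplit : (List.ofFn (fun k => Matrix.single (f k) (g k) (1:K))).prod =
        Matrix.single (f 0) (g 0) 1 *
          (List.ofFn (fun k : Fin (m+1) => Matrix.single (f k.succ) (g k.succ) (1:K))).prod := by
      rw [List.ofFn_succ, List.prod_cons]
    have hP : (List.ofFn (fun k : Fin (m+1) => Matrix.single (f k.succ) (g k.succ) (1:K))).prod ≠ 0 := by
      intro h; exact hne (by rw [hsplit, h, mul_zero])
    obtain ⟨ch, hPeq⟩ := ih (fun k => f k.succ) (fun k => g k.succ) hP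
    have h01 : g 0 = f (Fin.succ 0) := by
      by_contra hne0
      exact hne (by rw [hsplit, hPeq, Matrix.single_mul_single_of_ne (h := hne0)])
    refine ⟨?_, ?_⟩
    · intro k hk
      cases k with
      | zero =>
        have : (⟨1, by omega⟩ : Fin (m+2)) = Fin.succ 0 := by
          apply Fin.ext; simp
        rw [this]
        exact h01
      | succ k =>
        have hk' : k < m := by omega
        have := ch k hk'
        have e1 : (⟨k, by omega⟩ : Fin (m+1)).succ = (⟨k+1, by omega⟩ : Fin (m+2)) := by
          apply Fin.ext; simp
        have e2 : (⟨k+1, by omega⟩ : Fin (m+1)).succ = (⟨k+2, by omega⟩ : Fin (m+2)) := by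
          apply Fin.ext; simp
        rw [e1, e2] at this
        exact this
    · rw [hsplit, hPeq, h01, Matrix.single_mul_single_same, one_mul, Fin.succ_last]
theorem perm_apply_inv_self' {α : Type*} (σ : Equiv.Perm α) (x : α) : σ (σ⁻¹ x) = x :=
  Equiv.apply_symm_apply σ x

theorem perm_inv_apply_self' {α : Type*} (σ : Equiv.Perm α) (x : α) : σ⁻¹ (σ x) = x :=
  Equiv.symm_apply_apply σ x

def Tset {m : ℕ} (σ : Equiv.Perm (Fin m)) (l : ℕ) : Finset (Fin m) :=
  Finset.univ.filter (fun i => (σ i : ℕ) ≤ l)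

lemma mem_Tset {m : ℕ} (σ : Equiv.Perm (Fin m)) (l : ℕ) (i : Fin m) :
    i ∈ Tset σ l ↔ (σ i : ℕ) ≤ l := by simp [Tset]

def Conv {m : ℕ} (σ : Equiv.Perm (Fin m)) (l : ℕ) : Prop :=
  ∀ i i' i'' : Fin m, i ∈ Tset σ l → i' ∈ Tset σ l → i ≤ i'' → i'' ≤ i' → i'' ∈ Tset σ l

def Good {m : ℕ} (σ : Equiv.Perm (Fin m)) (k : ℕ) : Prop := ∀ l ≤ k, Conv σ l

lemma Tset_nonempty {m' : ℕ} (σ : Equiv.Perm (Fin (m'+1))) (l : ℕ) :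
    (Tset σ l).Nonempty := by
  refine ⟨σ⁻¹ ⟨0, by omega⟩, ?_⟩
  rw [mem_Tset, perm_apply_inv_self']
  exact Nat.zero_le l

lemma conv_iff_Icc {m' : ℕ} (σ : Equiv.Perm (Fin (m'+1))) (l : ℕ) (h : Conv σ l) (i : Fin (m'+1)) :
    i ∈ Tset σ l ↔ (Tset σ l).min' (Tset_nonempty σ l) ≤ i ∧ i ≤ (Tset σ l).max' (Tset_nonempty σ l) := by
  constructor
  · intro hi
    exact ⟨Finset.min'_le _ _ hi, Finset.le_max' _ _ hi⟩
  · rintro ⟨h1, h2⟩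
    exact h _ _ i (Finset.min'_mem _ _) (Finset.max'_mem _ _) h1 h2

lemma tt_iff {m' : ℕ} (σ : Equiv.Perm (Fin (m'+1))) :
    σ ∈ TT (m'+1) ↔ ∀ l, Conv σ l := by
  constructor
  · rintro ⟨t, ht0, hdec, hinc⟩ l i i' i'' hi hi' h1 h2
    rw [mem_Tset] at hi hi' ⊢
    rcases le_total i'' t with h | h
    · rcases eq_or_lt_of_le h1 with rfl | hlt
      · exact hi
      · have := hdec i i'' hlt h
        rw [Fin.lt_def] at this
        omega
    · rcases eq_or_lt_of_le h2 with rfl | hlt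
      · exact hi'
      · have := hinc i'' i' h hlt
        rw [Fin.lt_def] at this
        omega
  · intro hc
    refine ⟨σ⁻¹ ⟨0, by omega⟩, by simp, ?_, ?_⟩
    · intro x y hxy hyt
      have h1 : x ∈ Tset σ (σ x) := by rw [mem_Tset]
      have h2 : σ⁻¹ ⟨0, by omega⟩ ∈ Tset σ (σ x) := by
        rw [mem_Tset, perm_apply_inv_self']; exact Nat.zero_le _
      have h3 := hc (σ x) x _ y h1 h2 hxy.le hyt
      rw [mem_Tset] at h3
      have hne : σ y ≠ σ x := fun h => absurd (σ.injective h) (Fin.ne_of_gt hxy)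
      rw [Fin.lt_def]
      rw [Fin.ne_iff_vne] at hne
      omega
    · intro x y htx hxy
      have h1 : y ∈ Tset σ (σ y) := by rw [mem_Tset]
      have h2 : σ⁻¹ ⟨0, by omega⟩ ∈ Tset σ (σ y) := by
        rw [mem_Tset, perm_apply_inv_self']; exact Nat.zero_le _
      have h3 := hc (σ y) _ y x h2 h1 htx hxy.le
      rw [mem_Tset] at h3
      have hne : σ x ≠ σ y := fun h => absurd (σ.injective h) (Fin.ne_of_lt hxy)
      rw [Fin.lt_def]
      rw [Fin.ne_iff_vne] at hne
      omega

lemma good_iff_tt {m' : ℕ} (σ : Equiv.Perm (Fin (m'+1))) :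
    Good σ m' ↔ σ ∈ TT (m'+1) := by
  rw [tt_iff]
  constructor
  · intro hg l
    rcases le_or_gt l m' with h | h
    · exact hg l h
    · intro i i' i'' _ _ _ _
      rw [mem_Tset]
      have : (σ i'' : ℕ) < m' + 1 := (σ i'').isLt
      omega
  · intro h l _
    exact h l

lemma key_lemma {K : Type*} [Field K] {n m' : ℕ} (a : ℕ → Fin n)
    (hane : ∀ p q : ℕ, p ≤ m'+1 → q ≤ m'+1 → p ≠ q → a p ≠ a q)
    (σ : Equiv.Perm (Fin (m'+1))) (g : ℕ → UJ K n)
    (hg : ∀ (k : ℕ) (h : k < m'+1),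
      (g k).1 = Matrix.single (a ((σ⁻¹ ⟨k,h⟩ : Fin (m'+1)) : ℕ))
        (a (((σ⁻¹ ⟨k,h⟩ : Fin (m'+1)) : ℕ)+1)) (1:K)) :
    ∀ k, k ≤ m' →
      (Good σ k → (pp g k).1 =
        Matrix.single (a (((Tset σ k).min' (Tset_nonempty σ k)) : ℕ))
          (a ((((Tset σ k).max' (Tset_nonempty σ k)) : ℕ)+1)) 1) ∧
      (¬ Good σ k → pp g k = 0) := by
  intro k
  induction k with
  | zero =>
    intro _
    have hT0 : Tset σ 0 = {σ⁻¹ ⟨0, by omega⟩} := by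
      ext i
      rw [mem_Tset, Finset.mem_singleton]
      constructor
      · intro h
        have h' : σ i = ⟨0, by omega⟩ := Fin.ext (show (σ i : ℕ) = 0 by omega)
        rw [← h']
        exact (perm_inv_apply_self' σ i).symm
      · rintro rfl
        rw [perm_apply_inv_self']
    constructor
    · intro _
      show (g 0).1 = _
      rw [hg 0 (by omega)]
      have h1 : (Tset σ 0).min' (Tset_nonempty σ 0) = σ⁻¹ ⟨0, by omega⟩ := by
        simp [hT0]
      have h2 : (Tset σ 0).max' (Tset_nonempty σ 0) = σ⁻¹ ⟨0, by omega⟩ := by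
        simp [hT0]
      rw [h1, h2]
    · intro hbad
      exfalso
      apply hbad
      intro l hl
      have hl0 : l = 0 := by omega
      subst hl0
      intro i i' i'' hi hi' h1 h2
      rw [hT0, Finset.mem_singleton] at hi hi' ⊢
      subst hi
      subst hi'
      exact le_antisymm h2 h1
  | succ k ih =>
    intro hk1
    obtain ⟨ihg, ihb⟩ := ih (by omega)
    by_cases hGk : Good σ k
    case neg =>
      have hz : pp g (k+1) = 0 := by
        show jmul (pp g k) (g (k+1)) = 0
        rw [ihb hGk]
        exact jmul_zero_left _
      exact ⟨fun hGk1 => absurd (fun l hl => hGk1 l (by omega)) hGk, fun _ => hz⟩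
    case pos =>
      have hmat := ihg hGk
      set u := (Tset σ k).min' (Tset_nonempty σ k) with hu
      set v := (Tset σ k).max' (Tset_nonempty σ k) with hv
      have huv : (u:ℕ) ≤ (v:ℕ) := Fin.le_def.mp (Finset.min'_le _ _ (Finset.max'_mem _ _))
      set w := σ⁻¹ (⟨k+1, by omega⟩ : Fin (m'+1)) with hw
      have hσw : (σ w : ℕ) = k+1 := by rw [hw, perm_apply_inv_self']
      have hwT : w ∉ Tset σ k := by rw [mem_Tset]; omega
      have hTsucc : Tset σ (k+1) = insert w (Tset σ k) := by
        ext i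
        rw [mem_Tset, Finset.mem_insert, mem_Tset]
        constructor
        · intro h
          rcases eq_or_lt_of_le h with he | hlt
          · left
            have h' : σ i = σ w := Fin.ext (by omega)
            exact σ.injective h'
          · right; omega
        · rintro (rfl | h)
          · omega
          · omega
      have hwuv : (w:ℕ) < (u:ℕ) ∨ (v:ℕ) < (w:ℕ) := by
        by_contra hcon
        push_neg at hcon
        exact hwT (hGk k le_rfl u v w (Finset.min'_mem _ _) (Finset.max'_mem _ _)
          (by rw [Fin.le_def]; omega) (by rw [Fin.le_def]; omega))
      have hgk1 : (g (k+1)).1 = Matrix.single (a (w:ℕ)) (a ((w:ℕ)+1)) 1 :=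
        hg (k+1) (by omega)
      have hppval : (pp g (k+1)).1 =
          Matrix.single (a (u:ℕ)) (a ((v:ℕ)+1)) 1 *
            Matrix.single (a (w:ℕ)) (a ((w:ℕ)+1)) 1
          + Matrix.single (a (w:ℕ)) (a ((w:ℕ)+1)) 1 *
            Matrix.single (a (u:ℕ)) (a ((v:ℕ)+1)) 1 := by
        show (jmul (pp g k) (g (k+1))).1 = _
        rw [jmul_val, hmat, hgk1]
      have hvlt : (v:ℕ) < m'+1 := v.isLt
      have hwlt : (w:ℕ) < m'+1 := w.isLt
      have hult : (u:ℕ) < m'+1 := u.isLt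
      by_cases hA : (w:ℕ)+1 = (u:ℕ)
      · -- extend left
        have hwu : (w:ℕ) < (u:ℕ) := by omega
        have hne1 : a ((v:ℕ)+1) ≠ a (w:ℕ) := hane _ _ (by omega) (by omega) (by omega)
        have hval : (pp g (k+1)).1 = Matrix.single (a (w:ℕ)) (a ((v:ℕ)+1)) 1 := by
          rw [hppval, Matrix.single_mul_single_of_ne (h := hne1), hA,
            Matrix.single_mul_single_same, one_mul, zero_add]
        have hmin : (Tset σ (k+1)).min' (Tset_nonempty σ (k+1)) = w := by
          apply le_antisymm
          · exact Finset.min'_le _ _ (by rw [hTsucc]; exact Finset.mem_insert_self _ _)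
          · apply Finset.le_min'
            intro y hy
            rw [hTsucc, Finset.mem_insert] at hy
            rcases hy with rfl | hy
            · exact le_rfl
            · have h3 : u ≤ y := Finset.min'_le _ _ hy
              rw [Fin.le_def] at h3 ⊢
              omega
        have hmax : (Tset σ (k+1)).max' (Tset_nonempty σ (k+1)) = v := by
          apply le_antisymm
          · apply Finset.max'_le
            intro y hy
            rw [hTsucc, Finset.mem_insert] at hy
            rcases hy with rfl | hy
            · rw [Fin.le_def]; omega
            · exact Finset.le_max' _ _ hy
          · exact Finset.le_max' _ _
              (by rw [hTsucc]; exact Finset.mem_insert_of_mem (Finset.max'_mem _ _))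
        have hIcc1 : ∀ i : Fin (m'+1), i ∈ Tset σ (k+1) ↔ ((w:ℕ) ≤ (i:ℕ) ∧ (i:ℕ) ≤ (v:ℕ)) := by
          intro i
          rw [hTsucc, Finset.mem_insert]
          constructor
          · rintro (rfl | hi)
            · exact ⟨le_rfl, by omega⟩
            · have h3 : u ≤ i := Finset.min'_le _ _ hi
              have h4 : i ≤ v := Finset.le_max' _ _ hi
              rw [Fin.le_def] at h3 h4
              omega
          · rintro ⟨h3, h4⟩
            rcases eq_or_lt_of_le h3 with he | hlt
            · exact Or.inl (Fin.ext he.symm)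
            · refine Or.inr ((conv_iff_Icc σ k (hGk k le_rfl) i).mpr ⟨?_, ?_⟩)
              · rw [Fin.le_def]; omega
              · rw [Fin.le_def]; omega
        have hGk1 : Good σ (k+1) := by
          intro l hl
          rcases le_or_gt l k with h | h
          · exact hGk l h
          · have hlk : l = k+1 := by omega
            subst hlk
            intro i i' i'' hi hi' h1 h2
            rw [hIcc1] at hi hi' ⊢
            rw [Fin.le_def] at h1 h2
            omega
        refine ⟨fun _ => ?_, fun hbad => absurd hGk1 hbad⟩
        rw [hmin, hmax]
        exact hval
      · by_cases hB : (w:ℕ) = (v:ℕ)+1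
        · -- extend right
          have hne2 : a ((w:ℕ)+1) ≠ a (u:ℕ) := hane _ _ (by omega) (by omega) (by omega)
          have hval : (pp g (k+1)).1 = Matrix.single (a (u:ℕ)) (a ((w:ℕ)+1)) 1 := by
            rw [hppval, Matrix.single_mul_single_of_ne (h := hne2), ← hB,
              Matrix.single_mul_single_same, one_mul, add_zero]
          have hmin : (Tset σ (k+1)).min' (Tset_nonempty σ (k+1)) = u := by
            apply le_antisymm
            · exact Finset.min'_le _ _
                (by rw [hTsucc]; exact Finset.mem_insert_of_mem (Finset.min'_mem _ _))
            · apply Finset.le_min'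
              intro y hy
              rw [hTsucc, Finset.mem_insert] at hy
              rcases hy with rfl | hy
              · rw [Fin.le_def]; omega
              · exact Finset.min'_le _ _ hy
          have hmax : (Tset σ (k+1)).max' (Tset_nonempty σ (k+1)) = w := by
            apply le_antisymm
            · apply Finset.max'_le
              intro y hy
              rw [hTsucc, Finset.mem_insert] at hy
              rcases hy with rfl | hy
              · exact le_rfl
              · have h3 : y ≤ v := Finset.le_max' _ _ hy
                rw [Fin.le_def] at h3 ⊢
                omega
            · exact Finset.le_max' _ _ (by rw [hTsucc]; exact Finset.mem_insert_self _ _)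
          have hIcc1 : ∀ i : Fin (m'+1), i ∈ Tset σ (k+1) ↔ ((u:ℕ) ≤ (i:ℕ) ∧ (i:ℕ) ≤ (w:ℕ)) := by
            intro i
            rw [hTsucc, Finset.mem_insert]
            constructor
            · rintro (rfl | hi)
              · exact ⟨by omega, le_rfl⟩
              · have h3 : u ≤ i := Finset.min'_le _ _ hi
                have h4 : i ≤ v := Finset.le_max' _ _ hi
                rw [Fin.le_def] at h3 h4
                omega
            · rintro ⟨h3, h4⟩
              rcases eq_or_lt_of_le h4 with he | hlt
              · exact Or.inl (Fin.ext he)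
              · refine Or.inr ((conv_iff_Icc σ k (hGk k le_rfl) i).mpr ⟨?_, ?_⟩)
                · rw [Fin.le_def]; omega
                · rw [Fin.le_def]; omega
          have hGk1 : Good σ (k+1) := by
            intro l hl
            rcases le_or_gt l k with h | h
            · exact hGk l h
            · have hlk : l = k+1 := by omega
              subst hlk
              intro i i' i'' hi hi' h1 h2
              rw [hIcc1] at hi hi' ⊢
              rw [Fin.le_def] at h1 h2
              omega
          refine ⟨fun _ => ?_, fun hbad => absurd hGk1 hbad⟩
          rw [hmin, hmax]
          exact hval
        · -- product dies
          have hne1 : a ((v:ℕ)+1) ≠ a (w:ℕ) := hane _ _ (by omega) (by omega) (by omega)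
          have hne2 : a ((w:ℕ)+1) ≠ a (u:ℕ) := hane _ _ (by omega) (by omega) (by omega)
          have hz : pp g (k+1) = 0 := by
            apply Subtype.ext
            rw [Submodule.coe_zero, hppval, Matrix.single_mul_single_of_ne (h := hne1),
              Matrix.single_mul_single_of_ne (h := hne2), add_zero]
          have hnotgood : ¬ Good σ (k+1) := by
            intro hGk1
            have hconv := hGk1 (k+1) le_rfl
            rcases hwuv with hlt | hlt
            · have hwu1 : (w:ℕ)+1 < (u:ℕ) := by omega
              set z : Fin (m'+1) := ⟨(w:ℕ)+1, by omega⟩ with hz'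
              have hzmem : z ∈ Tset σ (k+1) := by
                refine hconv w u z ?_ ?_ ?_ ?_
                · rw [hTsucc]; exact Finset.mem_insert_self _ _
                · rw [hTsucc]; exact Finset.mem_insert_of_mem (Finset.min'_mem _ _)
                · rw [Fin.le_def]; simp [hz']
                · rw [Fin.le_def]; simp [hz']; omega
              rw [hTsucc, Finset.mem_insert] at hzmem
              rcases hzmem with he | hmem
              · have : (w:ℕ)+1 = (w:ℕ) := by
                  have := congrArg (Fin.val) he
                  simpa [hz'] using this
                omega
              · have h3 : u ≤ z := Finset.min'_le _ _ hmem
                rw [Fin.le_def] at h3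
                simp [hz'] at h3
                omega
            · have hvw1 : (v:ℕ)+1 < (w:ℕ) := by omega
              set z : Fin (m'+1) := ⟨(v:ℕ)+1, by omega⟩ with hz'
              have hzmem : z ∈ Tset σ (k+1) := by
                refine hconv v w z ?_ ?_ ?_ ?_
                · rw [hTsucc]; exact Finset.mem_insert_of_mem (Finset.max'_mem _ _)
                · rw [hTsucc]; exact Finset.mem_insert_self _ _
                · rw [Fin.le_def]; simp [hz']
                · rw [Fin.le_def]; simp [hz']; omega
              rw [hTsucc, Finset.mem_insert] at hzmem
              rcases hzmem with he | hmem
              · have : (v:ℕ)+1 = (w:ℕ) := by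
                  have := congrArg (Fin.val) he
                  simpa [hz'] using this
                omega
              · have h3 : z ≤ v := Finset.le_max' _ _ hmem
                rw [Fin.le_def] at h3
                simp [hz'] at h3
          exact ⟨fun hGk1 => absurd hGk1 hnotgood, fun _ => hz⟩


/-- For strictly upper triangular matrix units `r_1, …, r_m` with nonzero associative
product, the left-normed Jordan product `r_{σ⁻¹(1)} ∘ ⋯ ∘ r_{σ⁻¹(m)}` is nonzero iff
`σ ∈ 𝒯_m`. -/
theorem statement_8 {K : Type*} [Field K] (h2 : (2 : K) ≠ 0)
    {n : ℕ} (hn : 2 ≤ n) (m : ℕ) (hm : 1 ≤ m) (r : Fin m → UJ K n)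
    (hr : ∀ k : Fin m, ∃ (i j : Fin n) (hij : i < j), r k = Eu K i j hij.le)
    (hprod : (List.ofFn (fun k => (r k).1)).prod ≠ 0)
    (σ : Equiv.Perm (Fin m)) :
    jprod (List.ofFn (fun k => r (σ⁻¹ k))) ≠ 0 ↔ σ ∈ TT m := by
  obtain ⟨m', rfl⟩ : ∃ m', m = m'+1 := ⟨m-1, by omega⟩
  choose I J hlt hEq using hr
  have hprod' : (List.ofFn (fun k => Matrix.single (I k) (J k) (1:K))).prod ≠ 0 := by
    have he : (fun k : Fin (m'+1) => (r k).1) =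
        fun k => Matrix.single (I k) (J k) (1:K) := by
      funext k; rw [hEq k]; rfl
    rwa [he] at hprod
  obtain ⟨hchain, -⟩ := prod_chain m' I J hprod'
  obtain ⟨a, haI, haJ⟩ : ∃ a : ℕ → Fin n,
      (∀ (k : ℕ) (h : k < m'+1), a k = I ⟨k,h⟩) ∧
      (∀ (k : ℕ) (h : k < m'+1), a (k+1) = J ⟨k,h⟩) := by
    refine ⟨fun k => if h : k < m'+1 then I ⟨k,h⟩ else J ⟨m', by omega⟩,
      fun k h => dif_pos h, ?_⟩
    intro k h
    by_cases h' : k+1 < m'+1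
    · exact (dif_pos h').trans (hchain k (by omega)).symm
    · have hk : k = m' := by omega
      subst hk
      exact dif_neg h'
  have hmono : ∀ k : ℕ, k < m'+1 → (a k : ℕ) < (a (k+1) : ℕ) := by
    intro k h
    rw [haI k h, haJ k h]
    exact Fin.lt_def.mp (hlt ⟨k, h⟩)
  have hstrict : ∀ d p : ℕ, p + d + 1 ≤ m'+1 → (a p : ℕ) < (a (p+d+1) : ℕ) := by
    intro d
    induction d with
    | zero => intro p hp; exact hmono p (by omega)
    | succ d ihd =>
      intro p hp
      have h1 := ihd p (by omega)
      have h2 := hmono (p+d+1) (by omega)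
      have he : p + (d+1) + 1 = (p+d+1)+1 := by omega
      rw [he]
      omega
  have hane : ∀ p q : ℕ, p ≤ m'+1 → q ≤ m'+1 → p ≠ q → a p ≠ a q := by
    intro p q hp hq hne heq
    have hval := congrArg Fin.val heq
    rcases Nat.lt_or_ge p q with h | h
    · have hs := hstrict (q - p - 1) p (by omega)
      have he : p + (q - p - 1) + 1 = q := by omega
      rw [he] at hs
      omega
    · have hlt' : q < p := by omega
      have hs := hstrict (p - q - 1) q (by omega)
      have he : q + (p - q - 1) + 1 = p := by omega
      rw [he] at hs
      omega
  have r_val : ∀ j : Fin (m'+1), (r j).1 =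
      Matrix.single (a (j:ℕ)) (a ((j:ℕ)+1)) (1:K) := by
    intro j
    rw [hEq j]
    show Matrix.single (I j) (J j) 1 = _
    rw [haI (j:ℕ) j.isLt, haJ (j:ℕ) j.isLt]
  obtain ⟨g, hg0⟩ : ∃ g : ℕ → UJ K n, ∀ (k : ℕ) (h : k < m'+1), g k = r (σ⁻¹ ⟨k,h⟩) :=
    ⟨fun k => if h : k < m'+1 then r (σ⁻¹ ⟨k,h⟩) else 0, fun k h => dif_pos h⟩
  have hgval : ∀ (k : ℕ) (h : k < m'+1),
      (g k).1 = Matrix.single (a ((σ⁻¹ ⟨k,h⟩ : Fin (m'+1)) : ℕ))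
        (a (((σ⁻¹ ⟨k,h⟩ : Fin (m'+1)) : ℕ)+1)) (1:K) := by
    intro k h
    rw [hg0 k h, r_val]
  have hjp : jprod (List.ofFn (fun k : Fin (m'+1) => r (σ⁻¹ k))) = pp g m' := by
    rw [List.ofFn_succ]
    show List.foldl jmul (r (σ⁻¹ 0)) (List.ofFn fun i : Fin m' => r (σ⁻¹ (Fin.succ i))) = _
    have e0 : r (σ⁻¹ 0) = g 0 := by
      rw [hg0 0 (by omega)]
      have hz : (0 : Fin (m'+1)) = ⟨0, by omega⟩ := by apply Fin.ext; simp
      rw [hz]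
    have e1 : (fun i : Fin m' => r (σ⁻¹ (Fin.succ i))) = fun i : Fin m' => g ((i:ℕ)+1) := by
      funext i
      rw [hg0 ((i:ℕ)+1) (by omega)]
      have hz : Fin.succ i = (⟨(i:ℕ)+1, by omega⟩ : Fin (m'+1)) := by apply Fin.ext; simp
      rw [hz]
    rw [e0, e1]
    exact foldl_eq_pp g m'
  rw [hjp, ← good_iff_tt]
  obtain ⟨hgood, hbad⟩ := key_lemma a hane σ g hgval m' le_rfl
  constructor
  · intro hne
    by_contra hb
    exact hne (hbad hb)
  · intro hG hzero
    have hm2 := hgood hG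
    rw [hzero, Submodule.coe_zero] at hm2
    exact stdBM_ne_zero _ _ hm2.symm
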